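/- The elliptic alpha function satisfies the duplication formula α(4r) = (1 + k_{4r})² α(r) − 2√r · k_{4r}, where k_{4r} is the singular modulus of order 4r. -/

import Mathlib

open Real Filter

/-- Complete elliptic integral of the first kind, `K(k) = ∫₀^{π/2} dt/√(1-k² sin² t)`. -/
noncomputable def ellipticK (k : ℝ) : ℝ :=
  ∫ t in (0:ℝ)..(π/2), 1 / Real.sqrt (1 - k^2 * Real.sin t ^ 2)

/-- Complete elliptic integral of the second kind, `E(k) = ∫₀^{π/2} √(1-k² sin² t) dt`. -/
noncomputable def ellipticE (k : ℝ) : ℝ :=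
  ∫ t in (0:ℝ)..(π/2), Real.sqrt (1 - k^2 * Real.sin t ^ 2)

set_option maxHeartbeats 1000000
open intervalIntegral Set Topology

lemma base_pos {k : ℝ} (hk : k^2 < 1) (t : ℝ) : 0 < 1 - k^2 * Real.sin t ^ 2 := by
  have h1 : k^2 * Real.sin t ^ 2 ≤ k^2 * 1 := by
    apply mul_le_mul_of_nonneg_left _ (sq_nonneg k)
    have := Real.sin_le_one t; have := Real.neg_one_le_sin t
    nlinarith
  nlinarith

lemma contE {k : ℝ} (hk : k^2 < 1) :
    Continuous (fun t => Real.sqrt (1 - k^2 * Real.sin t ^ 2)) := by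
  fun_prop

lemma contK {k : ℝ} (hk : k^2 < 1) :
    Continuous (fun t => 1 / Real.sqrt (1 - k^2 * Real.sin t ^ 2)) := by
  apply Continuous.div continuous_const (contE hk)
  intro t
  exact (Real.sqrt_pos.2 (base_pos hk t)).ne'

lemma ellipticK_pos {k : ℝ} (hk : k^2 < 1) : 0 < ellipticK k := by
  unfold ellipticK
  apply intervalIntegral.intervalIntegral_pos_of_pos_on
    ((contK hk).intervalIntegrable _ _)
  · intro x _
    have := base_pos hk x
    positivity
  · positivity

lemma ellipticK_lt {a c : ℝ} (ha : 0 ≤ a) (hac : a < c) (hc : c < 1) :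
    ellipticK a < ellipticK c := by
  unfold ellipticK
  have ha2 : a^2 < 1 := by nlinarith
  have hc2 : c^2 < 1 := by nlinarith
  apply intervalIntegral.integral_lt_integral_of_continuousOn_of_le_of_exists_lt
    (by positivity) ((contK ha2).continuousOn) ((contK hc2).continuousOn)
  · intro x _
    have h1 := base_pos ha2 x
    have h2 := base_pos hc2 x
    apply one_div_le_one_div_of_le (Real.sqrt_pos.2 h2)
    apply Real.sqrt_le_sqrt
    nlinarith [mul_le_mul_of_nonneg_right (by nlinarith : a^2 ≤ c^2) (sq_nonneg (Real.sin x))]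
  · refine ⟨π/4, ⟨by positivity, by nlinarith [pi_pos]⟩, ?_⟩
    have hs : Real.sin (π/4) ^ 2 = 1/2 := by
      rw [Real.sin_pi_div_four, div_pow, Real.sq_sqrt (by norm_num : (0:ℝ) ≤ 2)]
      norm_num
    rw [hs]
    have h1 : (0:ℝ) < 1 - a^2 * (1/2) := by nlinarith
    have h2 : (0:ℝ) < 1 - c^2 * (1/2) := by nlinarith
    apply one_div_lt_one_div_of_lt (Real.sqrt_pos.2 h2)
    apply Real.sqrt_lt_sqrt h2.le
    nlinarith

section gauss
variable {b : ℝ}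

lemma denom_pos (hb : 0 < b) (θ : ℝ) : 0 < 1 + b * Real.sin θ ^ 2 := by
  nlinarith [sq_nonneg (Real.sin θ)]

-- w and its properties
lemma w_sq_lt_one (hb : 0 < b) (hb1 : b < 1) {θ : ℝ} (hs : Real.sin θ ^ 2 < 1) :
    ((1+b) * Real.sin θ / (1 + b * Real.sin θ ^ 2))^2 < 1 := by
  have hd := denom_pos hb θ
  have h1 : 0 < 1 - Real.sin θ ^ 2 := by linarith
  have h2 : 0 < 1 - b^2 * Real.sin θ ^ 2 := by nlinarith [sq_nonneg (Real.sin θ)]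
  rw [div_pow, div_lt_one (by positivity)]
  nlinarith [mul_pos h1 h2]

lemma hasDerivAt_w (hb : 0 < b) (θ : ℝ) :
    HasDerivAt (fun θ => (1+b) * Real.sin θ / (1 + b * Real.sin θ ^ 2))
      ((1+b) * Real.cos θ * (1 - b * Real.sin θ ^ 2) / (1 + b * Real.sin θ ^ 2)^2) θ := by
  have hd := denom_pos hb θ
  have h1 : HasDerivAt (fun θ => (1+b) * Real.sin θ) ((1+b) * Real.cos θ) θ :=
    (Real.hasDerivAt_sin θ).const_mul _
  have h2 : HasDerivAt (fun θ => 1 + b * Real.sin θ ^ 2)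
      (b * (2 * Real.sin θ * Real.cos θ)) θ := by
    have := ((Real.hasDerivAt_sin θ).pow 2).const_mul b
    simpa using this.const_add 1
  have := h1.div h2 hd.ne'
  refine this.congr_deriv ?_
  field_simp
  ring

lemma sqrt_one_sub_w_sq (hb : 0 < b) (hb1 : b < 1) {θ : ℝ} (hs : Real.sin θ ^ 2 < 1) (hc : 0 < Real.cos θ) :
    Real.sqrt (1 - ((1+b) * Real.sin θ / (1 + b * Real.sin θ ^ 2))^2)
      = Real.cos θ * Real.sqrt (1 - b^2 * Real.sin θ ^ 2) / (1 + b * Real.sin θ ^ 2) := by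
  have hd := denom_pos hb θ
  have hb2 : b^2 * Real.sin θ ^ 2 < 1 := by nlinarith [sq_nonneg (Real.sin θ)]
  have hq : Real.sqrt (1 - b^2 * Real.sin θ ^ 2) ^ 2 = 1 - b^2 * Real.sin θ ^ 2 :=
    Real.sq_sqrt (by linarith)
  have hcs : Real.cos θ ^ 2 = 1 - Real.sin θ ^ 2 := Real.cos_sq' θ
  rw [show 1 - ((1+b) * Real.sin θ / (1 + b * Real.sin θ ^ 2))^2
      = (Real.cos θ * Real.sqrt (1 - b^2 * Real.sin θ ^ 2) / (1 + b * Real.sin θ ^ 2))^2 by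
    field_simp
    nlinarith [hq, hcs]]
  exact Real.sqrt_sq (by positivity)


lemma hasDerivAt_phi (hb : 0 < b) (hb1 : b < 1) {θ : ℝ} (hs : Real.sin θ ^ 2 < 1)
    (hc : 0 < Real.cos θ) :
    HasDerivAt (fun θ => Real.arcsin ((1+b) * Real.sin θ / (1 + b * Real.sin θ ^ 2)))
      ((1+b) * (1 - b * Real.sin θ ^ 2) /
        ((1 + b * Real.sin θ ^ 2) * Real.sqrt (1 - b^2 * Real.sin θ ^ 2))) θ := by
  have hd := denom_pos hb θ
  have hw := w_sq_lt_one hb hb1 hs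
  set w := (1+b) * Real.sin θ / (1 + b * Real.sin θ ^ 2) with hwdef
  have hw1 : w < 1 := by nlinarith
  have hwm : (-1:ℝ) < w := by nlinarith
  have h2 : 0 < 1 - b^2 * Real.sin θ ^ 2 := by nlinarith [sq_nonneg (Real.sin θ)]
  have hq : 0 < Real.sqrt (1 - b^2 * Real.sin θ ^ 2) := Real.sqrt_pos.2 h2
  have harc := Real.hasDerivAt_arcsin hwm.ne' hw1.ne
  have := harc.comp θ (hasDerivAt_w hb θ)
  refine this.congr_deriv ?_
  rw [sqrt_one_sub_w_sq hb hb1 hs hc]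
  field_simp

lemma sqrt_gauss_sub (hb : 0 < b) (hb1 : b < 1) {θ : ℝ} (hs : Real.sin θ ^ 2 ≤ 1) :
    Real.sqrt (1 - (2*Real.sqrt b/(1+b))^2 * ((1+b) * Real.sin θ / (1 + b * Real.sin θ ^ 2))^2)
      = (1 - b * Real.sin θ ^ 2) / (1 + b * Real.sin θ ^ 2) := by
  have hd := denom_pos hb θ
  have hbs : b * Real.sin θ ^ 2 < 1 := by nlinarith
  have hsb : Real.sqrt b ^ 2 = b := Real.sq_sqrt hb.le
  rw [show 1 - (2*Real.sqrt b/(1+b))^2 * ((1+b) * Real.sin θ / (1 + b * Real.sin θ ^ 2))^2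
      = ((1 - b * Real.sin θ ^ 2) / (1 + b * Real.sin θ ^ 2))^2 by
    field_simp
    ring_nf
    rw [Real.sq_sqrt hb.le]
    ring]
  exact Real.sqrt_sq (div_nonneg (by linarith) (by linarith))

lemma cont_p (hb : 0 < b) (hb1 : b < 1) :
    Continuous (fun θ => (1+b) * (1 - b * Real.sin θ ^ 2) /
      ((1 + b * Real.sin θ ^ 2) * Real.sqrt (1 - b^2 * Real.sin θ ^ 2))) := by
  have h2 : ∀ θ, 0 < 1 - b^2 * Real.sin θ ^ 2 := by
    intro θ
    nlinarith [mul_le_mul_of_nonneg_left (Real.sin_sq_le_one θ) (sq_nonneg b)]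
  apply Continuous.div (by fun_prop) (by fun_prop)
  intro θ
  have := denom_pos hb θ
  have := Real.sqrt_pos.2 (h2 θ)
  positivity

lemma mem_uIcc_sub (hT : T ∈ Ioo (-(π/2)) (π/2)) {θ : ℝ} (hθ : θ ∈ Set.uIcc 0 T) :
    Real.sin θ ^ 2 < 1 ∧ 0 < Real.cos θ := by
  have hθ' : θ ∈ Ioo (-(π/2)) (π/2) := by
    have h0 : (0:ℝ) ∈ Ioo (-(π/2)) (π/2) := by constructor <;> [linarith [pi_pos]; linarith [pi_pos]]
    rcases Set.mem_uIcc.1 hθ with ⟨h1, h2⟩ | ⟨h1, h2⟩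
    · exact ⟨lt_of_lt_of_le h0.1 h1, lt_of_le_of_lt h2 hT.2⟩
    · exact ⟨lt_of_lt_of_le hT.1 h1, lt_of_le_of_lt h2 h0.2⟩
  have hc := Real.cos_pos_of_mem_Ioo hθ'
  refine ⟨?_, hc⟩
  nlinarith [Real.sin_sq_add_cos_sq θ]

lemma gaussK_partial (hb : 0 < b) (hb1 : b < 1) {T : ℝ} (hT : T ∈ Ioo (-(π/2)) (π/2)) :
    (∫ u in (0:ℝ)..(Real.arcsin ((1+b) * Real.sin T / (1 + b * Real.sin T ^ 2))),
        1 / Real.sqrt (1 - (2*Real.sqrt b/(1+b))^2 * Real.sin u ^ 2))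
      = (1+b) * ∫ θ in (0:ℝ)..T, 1 / Real.sqrt (1 - b^2 * Real.sin θ ^ 2) := by
  have hkk : (2*Real.sqrt b/(1+b))^2 < 1 := by
    have hsb : Real.sqrt b ^ 2 = b := Real.sq_sqrt hb.le
    have hsb1 : Real.sqrt b < 1 := by nlinarith [Real.sqrt_nonneg b]
    rw [div_pow, div_lt_one (by positivity)]
    nlinarith [Real.sqrt_nonneg b]
  have key := intervalIntegral.integral_comp_smul_deriv
    (f := fun θ => Real.arcsin ((1+b) * Real.sin θ / (1 + b * Real.sin θ ^ 2)))
    (f' := fun θ => (1+b) * (1 - b * Real.sin θ ^ 2) /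
      ((1 + b * Real.sin θ ^ 2) * Real.sqrt (1 - b^2 * Real.sin θ ^ 2)))
    (g := fun u => 1 / Real.sqrt (1 - (2*Real.sqrt b/(1+b))^2 * Real.sin u ^ 2))
    (a := 0) (b := T)
    (fun θ hθ => hasDerivAt_phi hb hb1 (mem_uIcc_sub hT hθ).1 (mem_uIcc_sub hT hθ).2)
    ((cont_p hb hb1).continuousOn)
    (contK hkk)
  simp only [Real.sin_zero, zero_pow, mul_zero, zero_div, Real.arcsin_zero, add_zero] at key
  rw [← key]
  rw [← intervalIntegral.integral_const_mul]
  apply intervalIntegral.integral_congr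
  intro θ hθ
  obtain ⟨hs, hc⟩ := mem_uIcc_sub hT hθ
  have hd := denom_pos hb θ
  have hw := w_sq_lt_one hb hb1 hs
  have hw1 : (1+b) * Real.sin θ / (1 + b * Real.sin θ ^ 2) ≤ 1 := by nlinarith
  have hwm : (-1:ℝ) ≤ (1+b) * Real.sin θ / (1 + b * Real.sin θ ^ 2) := by nlinarith
  have hbs : 0 < 1 - b * Real.sin θ ^ 2 := by nlinarith
  have h2 : 0 < 1 - b^2 * Real.sin θ ^ 2 := by nlinarith [sq_nonneg (Real.sin θ)]
  have hq : 0 < Real.sqrt (1 - b^2 * Real.sin θ ^ 2) := Real.sqrt_pos.2 h2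
  simp only [smul_eq_mul, Function.comp]
  rw [Real.sin_arcsin hwm hw1, sqrt_gauss_sub hb hb1 hs.le]
  field_simp


lemma kk_mem (hb : 0 < b) (hb1 : b < 1) : (2*Real.sqrt b/(1+b))^2 < 1 := by
  have hsb : Real.sqrt b ^ 2 = b := Real.sq_sqrt hb.le
  have hsb1 : Real.sqrt b < 1 := by nlinarith [Real.sqrt_nonneg b]
  rw [div_pow, div_lt_one (by positivity)]
  nlinarith [Real.sqrt_nonneg b]

lemma gaussK (hb : 0 < b) (hb1 : b < 1) :
    ellipticK (2*Real.sqrt b/(1+b)) = (1+b) * ellipticK b := by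
  have hkk := kk_mem hb hb1
  have hb2 : b^2 < 1 := by nlinarith
  set A : ℝ → ℝ := fun T => ∫ u in (0:ℝ)..(Real.arcsin ((1+b) * Real.sin T / (1 + b * Real.sin T ^ 2))),
    1 / Real.sqrt (1 - (2*Real.sqrt b/(1+b))^2 * Real.sin u ^ 2) with hA
  set R : ℝ → ℝ := fun T => (1+b) * ∫ θ in (0:ℝ)..T, 1 / Real.sqrt (1 - b^2 * Real.sin θ ^ 2) with hR
  have hAc : Continuous A := by
    apply Continuous.comp (intervalIntegral.continuous_primitive
      (fun a b => (contK hkk).intervalIntegrable a b) 0)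
    apply Real.continuous_arcsin.comp
    apply Continuous.div (by fun_prop) (by fun_prop)
    intro θ; exact (denom_pos hb θ).ne'
  have hRc : Continuous R := by
    exact continuous_const.mul (intervalIntegral.continuous_primitive
      (fun a b => (contK hb2).intervalIntegrable a b) 0)
  have hne : (𝓝[<] (π/2)).NeBot := nhdsLT_neBot _
  have heq : A (π/2) = R (π/2) := by
    apply tendsto_nhds_unique (f := A) (l := 𝓝[<] (π/2))
    · exact hAc.continuousAt.continuousWithinAt.tendsto
    · have : Tendsto R (𝓝[<] (π/2)) (𝓝 (R (π/2))) :=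
        hRc.continuousAt.continuousWithinAt.tendsto
      apply this.congr'
      apply Filter.eventuallyEq_of_mem (Ioo_mem_nhdsLT_of_mem
        (show π/2 ∈ Set.Ioc (-(π/2)) (π/2) from ⟨by linarith [pi_pos], le_refl _⟩))
      intro T hT
      exact (gaussK_partial hb hb1 hT).symm
  have hw2 : (1+b) * Real.sin (π/2) / (1 + b * Real.sin (π/2) ^ 2) = 1 := by
    rw [Real.sin_pi_div_two]; field_simp
  rw [hA, hR] at heq
  simp only [hw2, Real.arcsin_one] at heq
  rw [ellipticK, ellipticK]
  exact heq

lemma hasDerivAt_F (hb : 0 < b) (hb1 : b < 1) (θ : ℝ) :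
    HasDerivAt (fun θ => Real.sin θ * Real.cos θ * Real.sqrt (1 - b^2 * Real.sin θ ^ 2)
        / (1 + b * Real.sin θ ^ 2))
      ((1 - (2+b+2*b^2) * Real.sin θ ^ 2 + 3*b^2 * Real.sin θ ^ 4 + b^3 * Real.sin θ ^ 6)
        / ((1 + b * Real.sin θ ^ 2)^2 * Real.sqrt (1 - b^2 * Real.sin θ ^ 2))) θ := by
  have hd := denom_pos hb θ
  have hv : 0 < 1 - b^2 * Real.sin θ ^ 2 := by
    nlinarith [mul_le_mul_of_nonneg_left (Real.sin_sq_le_one θ) (sq_nonneg b)]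
  have hq : 0 < Real.sqrt (1 - b^2 * Real.sin θ ^ 2) := Real.sqrt_pos.2 hv
  have hq2 : Real.sqrt (1 - b^2 * Real.sin θ ^ 2) ^ 2 = 1 - b^2 * Real.sin θ ^ 2 :=
    Real.sq_sqrt hv.le
  have hu1 : HasDerivAt (fun θ => Real.sin θ * Real.cos θ)
      (Real.cos θ * Real.cos θ + Real.sin θ * (-Real.sin θ)) θ :=
    (Real.hasDerivAt_sin θ).mul (Real.hasDerivAt_cos θ)
  have hvd : HasDerivAt (fun θ => 1 - b^2 * Real.sin θ ^ 2)
      (-(b^2 * (2 * Real.sin θ * Real.cos θ))) θ := by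
    have := ((Real.hasDerivAt_sin θ).pow 2).const_mul (b^2)
    simpa using (this.const_sub 1)
  have hqd : HasDerivAt (fun θ => Real.sqrt (1 - b^2 * Real.sin θ ^ 2))
      ((-(b^2 * (2 * Real.sin θ * Real.cos θ))) / (2 * Real.sqrt (1 - b^2 * Real.sin θ ^ 2))) θ := by
    have := (Real.hasDerivAt_sqrt hv.ne').comp θ hvd
    refine this.congr_deriv ?_
    ring
  have hdd : HasDerivAt (fun θ => 1 + b * Real.sin θ ^ 2)
      (b * (2 * Real.sin θ * Real.cos θ)) θ := by
    have := ((Real.hasDerivAt_sin θ).pow 2).const_mul b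
    simpa using this.const_add 1
  have := (hu1.mul hqd).div hdd hd.ne'
  refine this.congr_deriv ?_
  have hcs : Real.cos θ ^ 2 = 1 - Real.sin θ ^ 2 := Real.cos_sq' θ
  simp only [Pi.mul_apply]
  field_simp
  congr 1
  rw [show 1 - Real.sin θ ^ 2 * b ^ 2 = 1 - b^2 * Real.sin θ ^ 2 by ring, hq2, hcs]
  ring

lemma cont_Fd (hb : 0 < b) (hb1 : b < 1) :
    Continuous (fun θ => (1 - (2+b+2*b^2) * Real.sin θ ^ 2 + 3*b^2 * Real.sin θ ^ 4
        + b^3 * Real.sin θ ^ 6) / ((1 + b * Real.sin θ ^ 2)^2 * Real.sqrt (1 - b^2 * Real.sin θ ^ 2))) := by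
  apply Continuous.div (by fun_prop) (by fun_prop)
  intro θ
  have h1 := denom_pos hb θ
  have hv : 0 < 1 - b^2 * Real.sin θ ^ 2 := by
    nlinarith [mul_le_mul_of_nonneg_left (Real.sin_sq_le_one θ) (sq_nonneg b)]
  have := Real.sqrt_pos.2 hv
  positivity

lemma gaussE_partial (hb : 0 < b) (hb1 : b < 1) {T : ℝ} (hT : T ∈ Ioo (-(π/2)) (π/2)) :
    (∫ u in (0:ℝ)..(Real.arcsin ((1+b) * Real.sin T / (1 + b * Real.sin T ^ 2))),
        Real.sqrt (1 - (2*Real.sqrt b/(1+b))^2 * Real.sin u ^ 2))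
      = (2/(1+b)) * (∫ θ in (0:ℝ)..T, Real.sqrt (1 - b^2 * Real.sin θ ^ 2))
        - (1-b) * (∫ θ in (0:ℝ)..T, 1 / Real.sqrt (1 - b^2 * Real.sin θ ^ 2))
        + (2*b/(1+b)) * (Real.sin T * Real.cos T * Real.sqrt (1 - b^2 * Real.sin T ^ 2)
            / (1 + b * Real.sin T ^ 2)) := by
  have hkk := kk_mem hb hb1
  have hb2 : b^2 < 1 := by nlinarith
  have key := intervalIntegral.integral_comp_smul_deriv
    (f := fun θ => Real.arcsin ((1+b) * Real.sin θ / (1 + b * Real.sin θ ^ 2)))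
    (f' := fun θ => (1+b) * (1 - b * Real.sin θ ^ 2) /
      ((1 + b * Real.sin θ ^ 2) * Real.sqrt (1 - b^2 * Real.sin θ ^ 2)))
    (g := fun u => Real.sqrt (1 - (2*Real.sqrt b/(1+b))^2 * Real.sin u ^ 2))
    (a := 0) (b := T)
    (fun θ hθ => hasDerivAt_phi hb hb1 (mem_uIcc_sub hT hθ).1 (mem_uIcc_sub hT hθ).2)
    ((cont_p hb hb1).continuousOn)
    (contE hkk)
  simp only [Real.sin_zero, zero_pow, mul_zero, zero_div, Real.arcsin_zero, add_zero] at key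
  rw [← key]
  have h1 : (∫ θ in (0:ℝ)..T,
      ((fun θ => (1+b) * (1 - b * Real.sin θ ^ 2) /
        ((1 + b * Real.sin θ ^ 2) * Real.sqrt (1 - b^2 * Real.sin θ ^ 2))) θ) •
        ((fun u => Real.sqrt (1 - (2*Real.sqrt b/(1+b))^2 * Real.sin u ^ 2)) ∘
          (fun θ => Real.arcsin ((1+b) * Real.sin θ / (1 + b * Real.sin θ ^ 2)))) θ)
    = ∫ θ in (0:ℝ)..T, ((2/(1+b)) * Real.sqrt (1 - b^2 * Real.sin θ ^ 2)
        - (1-b) * (1 / Real.sqrt (1 - b^2 * Real.sin θ ^ 2))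
        + (2*b/(1+b)) * ((1 - (2+b+2*b^2) * Real.sin θ ^ 2 + 3*b^2 * Real.sin θ ^ 4
            + b^3 * Real.sin θ ^ 6) / ((1 + b * Real.sin θ ^ 2)^2
              * Real.sqrt (1 - b^2 * Real.sin θ ^ 2)))) := by
    apply intervalIntegral.integral_congr
    intro θ hθ
    obtain ⟨hs, hc⟩ := mem_uIcc_sub hT hθ
    have hd := denom_pos hb θ
    have hw := w_sq_lt_one hb hb1 hs
    have hw1 : (1+b) * Real.sin θ / (1 + b * Real.sin θ ^ 2) ≤ 1 := by nlinarith
    have hwm : (-1:ℝ) ≤ (1+b) * Real.sin θ / (1 + b * Real.sin θ ^ 2) := by nlinarith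
    have hbs : 0 < 1 - b * Real.sin θ ^ 2 := by nlinarith
    have h2 : 0 < 1 - b^2 * Real.sin θ ^ 2 := by nlinarith [sq_nonneg (Real.sin θ)]
    have hq : 0 < Real.sqrt (1 - b^2 * Real.sin θ ^ 2) := Real.sqrt_pos.2 h2
    have hq2 : Real.sqrt (1 - b^2 * Real.sin θ ^ 2) ^ 2 = 1 - b^2 * Real.sin θ ^ 2 :=
      Real.sq_sqrt h2.le
    simp only [smul_eq_mul, Function.comp]
    rw [Real.sin_arcsin hwm hw1, sqrt_gauss_sub hb hb1 hs.le]
    field_simp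
    ring_nf
    rw [Real.sq_sqrt h2.le]
    ring
  rw [h1]
  have hiE : IntervalIntegrable (fun θ => Real.sqrt (1 - b^2 * Real.sin θ ^ 2)) MeasureTheory.volume 0 T :=
    (contE hb2).intervalIntegrable _ _
  have hiK : IntervalIntegrable (fun θ => 1 / Real.sqrt (1 - b^2 * Real.sin θ ^ 2)) MeasureTheory.volume 0 T :=
    (contK hb2).intervalIntegrable _ _
  have hiF : IntervalIntegrable (fun θ => (1 - (2+b+2*b^2) * Real.sin θ ^ 2 + 3*b^2 * Real.sin θ ^ 4
      + b^3 * Real.sin θ ^ 6) / ((1 + b * Real.sin θ ^ 2)^2 * Real.sqrt (1 - b^2 * Real.sin θ ^ 2)))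
      MeasureTheory.volume 0 T := (cont_Fd hb hb1).intervalIntegrable _ _
  rw [intervalIntegral.integral_add ((hiE.const_mul (2/(1+b))).sub (hiK.const_mul (1-b)))
        (hiF.const_mul (2*b/(1+b))),
      intervalIntegral.integral_sub (hiE.const_mul (2/(1+b))) (hiK.const_mul (1-b)),
      intervalIntegral.integral_const_mul, intervalIntegral.integral_const_mul,
      intervalIntegral.integral_const_mul]
  have hFT : (∫ θ in (0:ℝ)..T, (1 - (2+b+2*b^2) * Real.sin θ ^ 2 + 3*b^2 * Real.sin θ ^ 4
      + b^3 * Real.sin θ ^ 6) / ((1 + b * Real.sin θ ^ 2)^2 * Real.sqrt (1 - b^2 * Real.sin θ ^ 2)))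
      = Real.sin T * Real.cos T * Real.sqrt (1 - b^2 * Real.sin T ^ 2) / (1 + b * Real.sin T ^ 2)
        - Real.sin 0 * Real.cos 0 * Real.sqrt (1 - b^2 * Real.sin 0 ^ 2) / (1 + b * Real.sin 0 ^ 2) := by
    exact intervalIntegral.integral_eq_sub_of_hasDerivAt (fun θ _ => hasDerivAt_F hb hb1 θ) hiF
  rw [hFT]
  simp [Real.sin_zero]

lemma gaussE (hb : 0 < b) (hb1 : b < 1) :
    ellipticE (2*Real.sqrt b/(1+b)) = (2/(1+b)) * ellipticE b - (1-b) * ellipticK b := by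
  have hkk := kk_mem hb hb1
  have hb2 : b^2 < 1 := by nlinarith
  set A : ℝ → ℝ := fun T => ∫ u in (0:ℝ)..(Real.arcsin ((1+b) * Real.sin T / (1 + b * Real.sin T ^ 2))),
    Real.sqrt (1 - (2*Real.sqrt b/(1+b))^2 * Real.sin u ^ 2) with hA
  set R : ℝ → ℝ := fun T => (2/(1+b)) * (∫ θ in (0:ℝ)..T, Real.sqrt (1 - b^2 * Real.sin θ ^ 2))
        - (1-b) * (∫ θ in (0:ℝ)..T, 1 / Real.sqrt (1 - b^2 * Real.sin θ ^ 2))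
        + (2*b/(1+b)) * (Real.sin T * Real.cos T * Real.sqrt (1 - b^2 * Real.sin T ^ 2)
            / (1 + b * Real.sin T ^ 2)) with hR
  have hAc : Continuous A := by
    apply Continuous.comp (intervalIntegral.continuous_primitive
      (fun a b => (contE hkk).intervalIntegrable a b) 0)
    apply Real.continuous_arcsin.comp
    apply Continuous.div (by fun_prop) (by fun_prop)
    intro θ; exact (denom_pos hb θ).ne'
  have hRc : Continuous R := by
    apply Continuous.add
    apply Continuous.sub
    · exact continuous_const.mul (intervalIntegral.continuous_primitive
        (fun a b => (contE hb2).intervalIntegrable a b) 0)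
    · exact continuous_const.mul (intervalIntegral.continuous_primitive
        (fun a b => (contK hb2).intervalIntegrable a b) 0)
    · apply continuous_const.mul
      apply Continuous.div (by fun_prop) (by fun_prop)
      intro θ; exact (denom_pos hb θ).ne'
  have hne : (𝓝[<] (π/2)).NeBot := nhdsLT_neBot _
  have heq : A (π/2) = R (π/2) := by
    apply tendsto_nhds_unique (f := A) (l := 𝓝[<] (π/2))
    · exact hAc.continuousAt.continuousWithinAt.tendsto
    · have : Tendsto R (𝓝[<] (π/2)) (𝓝 (R (π/2))) :=
        hRc.continuousAt.continuousWithinAt.tendsto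
      apply this.congr'
      apply Filter.eventuallyEq_of_mem (Ioo_mem_nhdsLT_of_mem
        (show π/2 ∈ Set.Ioc (-(π/2)) (π/2) from ⟨by linarith [pi_pos], le_refl _⟩))
      intro T hT
      exact (gaussE_partial hb hb1 hT).symm
  have hw2 : (1+b) * Real.sin (π/2) / (1 + b * Real.sin (π/2) ^ 2) = 1 := by
    rw [Real.sin_pi_div_two]; field_simp
  rw [hA, hR] at heq
  simp only [hw2, Real.arcsin_one, Real.cos_pi_div_two, mul_zero, zero_mul, zero_div, add_zero] at heq
  rw [ellipticE, ellipticE, ellipticK]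
  rw [heq]

end gauss

lemma ratio_lt : ∀ x y : ℝ, 0 < x → x < y → y < 1 →
    ellipticK (Real.sqrt (1 - y^2)) / ellipticK y
      < ellipticK (Real.sqrt (1 - x^2)) / ellipticK x := by
  intro x y hx hxy hy1
  have hx2 : 0 < 1 - x^2 := by nlinarith
  have hy2 : 0 < 1 - y^2 := by nlinarith
  have hxs : Real.sqrt (1-x^2) ^ 2 = 1 - x^2 := Real.sq_sqrt hx2.le
  have hys : Real.sqrt (1-y^2) ^ 2 = 1 - y^2 := Real.sq_sqrt hy2.le
  have hxlt : Real.sqrt (1-y^2) < Real.sqrt (1-x^2) := by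
    apply Real.sqrt_lt_sqrt hy2.le
    nlinarith
  have hx1' : Real.sqrt (1-x^2) < 1 := by
    nlinarith [Real.sqrt_nonneg (1-x^2)]
  have hKxy : ellipticK x < ellipticK y := ellipticK_lt hx.le hxy hy1
  have hKyx : ellipticK (Real.sqrt (1-y^2)) < ellipticK (Real.sqrt (1-x^2)) :=
    ellipticK_lt (Real.sqrt_nonneg _) hxlt hx1'
  have hpx : 0 < ellipticK x := ellipticK_pos (by nlinarith)
  have hpy : 0 < ellipticK y := ellipticK_pos (by nlinarith)
  have hpys : 0 < ellipticK (Real.sqrt (1-y^2)) := ellipticK_pos (by nlinarith)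
  have hpxs : 0 < ellipticK (Real.sqrt (1-x^2)) := ellipticK_pos (by nlinarith)
  calc ellipticK (Real.sqrt (1-y^2)) / ellipticK y
      < ellipticK (Real.sqrt (1-x^2)) / ellipticK y := by
        exact div_lt_div_of_pos_right hKyx hpy
    _ < ellipticK (Real.sqrt (1-x^2)) / ellipticK x :=
        div_lt_div_of_pos_left hpxs hpx hKxy

/-- The elliptic alpha function value `α(r)`, expressed in terms of the singular
modulus `k = k_r`:  `α(r) = π/(4K(k)²) − √r (E(k)/K(k) − 1)`. -/
noncomputable def ellipticAlpha (r k : ℝ) : ℝ :=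
  π / (4 * ellipticK k ^ 2) - Real.sqrt r * (ellipticE k / ellipticK k - 1)

theorem ellipticAlpha_duplication (r k k4 : ℝ) (hr : 0 < r)
    (hk : k ∈ Set.Ioo (0:ℝ) 1)
    (hkr : ellipticK (Real.sqrt (1 - k^2)) / ellipticK k = Real.sqrt r)
    (hk4 : k4 ∈ Set.Ioo (0:ℝ) 1)
    (hkr4 : ellipticK (Real.sqrt (1 - k4^2)) / ellipticK k4 = Real.sqrt (4*r)) :
    ellipticAlpha (4*r) k4 = (1 + k4)^2 * ellipticAlpha r k - 2 * Real.sqrt r * k4 := by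
  obtain ⟨hk0, hk1⟩ := hk
  obtain ⟨hk40, hk41⟩ := hk4
  -- the complementary modulus
  set k' := Real.sqrt (1 - k^2) with hk'def
  have hk2 : 0 < 1 - k^2 := by nlinarith
  have hk'0 : 0 < k' := Real.sqrt_pos.2 hk2
  have hk'sq : k'^2 = 1 - k^2 := Real.sq_sqrt hk2.le
  have hk'1 : k' < 1 := by nlinarith [hk'sq, Real.sqrt_nonneg (1-k^2)]
  -- the candidate k4
  set c := (1 - k')/(1 + k') with hcdef
  have hc0 : 0 < c := by
    apply div_pos <;> linarith
  have hc1 : c < 1 := by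
    rw [hcdef, div_lt_one (by linarith)]; linarith
  -- 2√c/(1+c) = k
  have hsc : Real.sqrt c ^ 2 = c := Real.sq_sqrt hc0.le
  have h1c : 1 + c = 2/(1+k') := by
    rw [hcdef]; field_simp; ring
  have hck : 2*Real.sqrt c/(1+c) = k := by
    have hsq : (2*Real.sqrt c/(1+c))^2 = k^2 := by
      rw [div_pow, mul_pow, hsc, h1c, hcdef]
      field_simp
      nlinarith [hk'sq]
    have hnn : 0 ≤ 2*Real.sqrt c/(1+c) := by positivity
    nlinarith [hsq, hnn]
  -- √(1-c²) = 2√k'/(1+k')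
  have hsk' : Real.sqrt k' ^ 2 = k' := Real.sq_sqrt hk'0.le
  have hcc : Real.sqrt (1 - c^2) = 2*Real.sqrt k'/(1+k') := by
    have hh : (2*Real.sqrt k'/(1+k'))^2 = 4*k'/(1+k')^2 := by
      rw [div_pow, mul_pow, hsk']; norm_num
    rw [show 1 - c^2 = (2*Real.sqrt k'/(1+k'))^2 by
      rw [hh, hcdef]
      field_simp
      ring]
    exact Real.sqrt_sq (by positivity)
  -- Landen for K at c and k'
  have hKk : ellipticK k = (1+c) * ellipticK c := by rw [← hck]; exact gaussK hc0 hc1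
  have hKc' : ellipticK (Real.sqrt (1 - c^2)) = (1+k') * ellipticK k' := by
    rw [hcc]; exact gaussK hk'0 hk'1
  -- positivity of the K's
  have hKkpos : 0 < ellipticK k := ellipticK_pos (by nlinarith)
  have hKk'pos : 0 < ellipticK k' := ellipticK_pos (by nlinarith)
  have hKcpos : 0 < ellipticK c := ellipticK_pos (by nlinarith)
  -- ratio at c equals 2√r
  have hsqrt4 : Real.sqrt (4*r) = 2 * Real.sqrt r := by
    rw [show (4:ℝ)*r = (2*Real.sqrt r)^2 by
      rw [mul_pow, Real.sq_sqrt hr.le]; norm_num]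
    exact Real.sqrt_sq (by positivity)
  have hratc : ellipticK (Real.sqrt (1 - c^2)) / ellipticK c = Real.sqrt (4*r) := by
    rw [hKc', hsqrt4, ← hkr, hKk]
    rw [h1c]
    field_simp
  -- injectivity of the ratio: k4 = c
  have hk4c : k4 = c := by
    rcases lt_trichotomy k4 c with h | h | h
    · exfalso
      have := ratio_lt k4 c hk40 h hc1
      rw [hkr4, hratc] at this
      exact lt_irrefl _ this
    · exact h
    · exfalso
      have := ratio_lt c k4 hc0 h hk41
      rw [hkr4, hratc] at this
      exact lt_irrefl _ this
  -- Landen for E at c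
  have hEk : ellipticE k = (2/(1+c)) * ellipticE c - (1-c) * ellipticK c := by
    rw [← hck]; exact gaussE hc0 hc1
  -- closed forms for K and E at k4
  have hK4 : ellipticK k4 = (1+k') * ellipticK k / 2 := by
    rw [hk4c, hKk, h1c]
    field_simp
  have hE4 : ellipticE k4 = (ellipticE k + k' * ellipticK k) / (1+k') := by
    rw [hk4c]
    have h2 : ellipticE c = (1+c)/2 * (ellipticE k + (1-c) * ellipticK c) := by
      rw [hEk]; field_simp; ring
    rw [h2, hKk] at *
    rw [hcdef]
    have h1k' : (0:ℝ) < 1 + k' := by linarith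
    field_simp
    ring
  -- final algebra
  rw [ellipticAlpha, ellipticAlpha, hsqrt4, hK4, hE4, hk4c, hcdef]
  have h1k' : (0:ℝ) < 1 + k' := by linarith
  field_simp
  ring
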